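/- For every kite pseudo effect algebra K^{λ,ρ}_I(G), the map sending ⟨fⱼ : j ∈ I⟩ ∈ (G⁺)^I to (0, (fⱼ)) and ⟨aᵢ⁻¹ : i ∈ I⟩ ∈ (G⁻)^I to (1, (aᵢ⁻¹)) is an isomorphism of pseudo effect algebras from K^{λ,ρ}_I(G) onto Γ(W, u), where W = ℤ × G^I with the kite loop multiplication and u = (1, constant e). Hence every kite pseudo effect algebra is an interval in a unital po-loop. -/

import Mathlib

/-- A pseudo effect algebra: a partial algebra `(E; +, 0, 1)` where the partial
operation is modeled as `add : E → E → Option E` (`none` = undefined). -/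
structure PseudoEffectAlgebra (E : Type*) where
  add : E → E → Option E
  zero : E
  one : E
  /-- (i): `a+b` and `(a+b)+c` exist iff `b+c` and `a+(b+c)` exist, and then they are equal. -/
  assoc : ∀ a b c : E, (add a b).bind (fun x => add x c) = (add b c).bind (fun x => add a x)
  /-- (ii): there is exactly one `d` with `a + d = 1`. -/
  rcompl : ∀ a : E, ∃! d, add a d = some one
  /-- (ii): there is exactly one `e` with `e + a = 1`. -/
  lcompl : ∀ a : E, ∃! e', add e' a = some one
  /-- (iii): if `a+b` exists, then `a+b = d+a = b+e` for some `d, e`. -/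
  exch : ∀ a b s : E, add a b = some s → (∃ d, add d a = some s) ∧ (∃ e', add b e' = some s)
  /-- (iv): if `1+a` exists then `a = 0`. -/
  one_add : ∀ a : E, (add one a).isSome → a = zero
  /-- (iv): if `a+1` exists then `a = 0`. -/
  add_one : ∀ a : E, (add a one).isSome → a = zero

open Classical in
/-- The universe of the kite: the disjoint union `(G⁺)^I ⊎ (G⁻)^I`. -/
def Kite (G : Type*) [Group G] [PartialOrder G] (I : Type*) : Type _ :=
  (I → {g : G // 1 ≤ g}) ⊕ (I → {g : G // g ≤ 1})

open Classical in
/-- The kite partial addition (rules (I)–(IV)); elements of the upper part `(G⁻)^I`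
are the tuples `⟨aᵢ⁻¹ : i ∈ I⟩`, stored via their values `aᵢ⁻¹ ∈ G⁻`. -/
noncomputable def kiteAdd {G : Type*} [Group G] [PartialOrder G]
    [CovariantClass G G (· * ·) (· ≤ ·)]
    [CovariantClass G G (Function.swap (· * ·)) (· ≤ ·)]
    {I : Type*} (l r : Equiv.Perm I) :
    Kite G I → Kite G I → Option (Kite G I)
  | Sum.inr _, Sum.inr _ => none                                      -- rule (I)
  | Sum.inr a, Sum.inl f =>                                           -- rule (II)
      if h : ∀ i, (f (r.symm i) : G) ≤ ((a i : G))⁻¹ then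
        some (Sum.inr (fun i => ⟨(a i : G) * (f (r.symm i) : G), by
          have := mul_le_mul_right (h i) ((a i : G))
          simpa using this⟩))
      else none
  | Sum.inl f, Sum.inr a =>                                           -- rule (III)
      if h : ∀ i, (f (l.symm i) : G) ≤ ((a i : G))⁻¹ then
        some (Sum.inr (fun i => ⟨(f (l.symm i) : G) * (a i : G), by
          have := mul_le_mul_left (h i) ((a i : G))
          simpa using this⟩))
      else none
  | Sum.inl f, Sum.inl g =>                                           -- rule (IV)
      some (Sum.inl (fun j => ⟨(f j : G) * (g j : G), one_le_mul (f j).2 (g j).2⟩))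
/-- The kite loop multiplication on `W = ℤ × G^I`:
`(m₁, x) * (m₂, y) = (m₁+m₂, i ↦ x_{λ^{-m₂}(i)} · y_{ρ^{-m₁}(i)})`. -/
def kmul {G I : Type*} [Group G] (l r : Equiv.Perm I) :
    ℤ × (I → G) → ℤ × (I → G) → ℤ × (I → G) :=
  fun p q =>
    (p.1 + q.1, fun i => p.2 ((l ^ (-q.1) : Equiv.Perm I) i) * q.2 ((r ^ (-p.1) : Equiv.Perm I) i))

/-- The identity element `(0, constant e)` of the kite loop. -/
def kone (G I : Type*) [Group G] : ℤ × (I → G) := (0, fun _ => 1)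

/-- The lexicographic order on `W = ℤ × G^I` (coordinatewise order on `G^I`). -/
def wle {G I : Type*} [PartialOrder G] (a b : ℤ × (I → G)) : Prop :=
  a.1 < b.1 ∨ (a.1 = b.1 ∧ ∀ i, a.2 i ≤ b.2 i)

/-- **Every kite pseudo effect algebra is an interval in a unital po-loop.**
The map `⟨fⱼ⟩ ↦ (0,(fⱼ))`, `⟨aᵢ⁻¹⟩ ↦ (1,(aᵢ⁻¹))` is an isomorphism of pseudo effect
algebras from the kite `K^{λ,ρ}_I(G)` onto the interval `Γ(W,u)` of the unital
po-loop `W = ℤ × G^I` (kite loop multiplication, lexicographic order, `u = (1,e)`):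
it is a bijection onto `{w : e ≤ w ≤ u}`, and `x + y` is defined and equal to `z` in
the kite iff `φ(x) * φ(y) ≤ u` and `φ(x) * φ(y) = φ(z)`. -/
theorem stmt17 {G : Type*} [Group G] [PartialOrder G]
    [CovariantClass G G (· * ·) (· ≤ ·)]
    [CovariantClass G G (Function.swap (· * ·)) (· ≤ ·)]
    {I : Type*} (l r : Equiv.Perm I) :
    let u : ℤ × (I → G) := ((1 : ℤ), fun _ => (1 : G))
    let φ : Kite G I → ℤ × (I → G) := fun k =>
      match k with
      | Sum.inl f => ((0 : ℤ), fun j => (f j : G))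
      | Sum.inr a => ((1 : ℤ), fun i => (a i : G))
    Function.Injective φ ∧
    Set.range φ = {w | wle (kone G I) w ∧ wle w u} ∧
    ∀ x y z : Kite G I,
      kiteAdd l r x y = some z ↔
        (wle (kmul l r (φ x) (φ y)) u ∧ kmul l r (φ x) (φ y) = φ z) := by

  intro u φ
  have hinj : Function.Injective φ := by
    intro x y hxy
    rcases x with f | a <;> rcases y with g | b <;>
      simp only [φ, Prod.mk.injEq] at hxy
    · exact congrArg Sum.inl (funext fun j => Subtype.ext (congrFun hxy.2 j))
    · exact absurd hxy.1 (by norm_num)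
    · exact absurd hxy.1 (by norm_num)
    · exact congrArg Sum.inr (funext fun i => Subtype.ext (congrFun hxy.2 i))
  refine ⟨hinj, ?_, ?_⟩
  · ext w
    constructor
    · rintro ⟨k, rfl⟩
      rcases k with f | a
      · exact ⟨Or.inr ⟨rfl, fun i => (f i).2⟩, Or.inl (by norm_num)⟩
      · exact ⟨Or.inl (by simp [kone, φ]), Or.inr ⟨rfl, fun i => (a i).2⟩⟩
    · obtain ⟨m, x⟩ := w
      rintro ⟨h1, h2⟩
      rcases h1 with h1 | ⟨h1, h1'⟩ <;> rcases h2 with h2 | ⟨h2, h2'⟩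
      · exfalso; simp only [kone, u] at h1 h2; omega
      · subst h2
        exact ⟨Sum.inr (fun i => ⟨x i, h2' i⟩), rfl⟩
      · simp only [kone] at h1; subst h1
        exact ⟨Sum.inl (fun j => ⟨x j, h1' j⟩), rfl⟩
      · simp [kone, u] at h1 h2; omega
  · intro x y z
    rcases x with f | a <;> rcases y with g | b
    · -- rule (IV): inl + inl
      set w : Kite G I := Sum.inl (fun j => ⟨(f j : G) * (g j : G),
        one_le_mul (f j).2 (g j).2⟩) with hw
      have hk : kmul l r (φ (Sum.inl f)) (φ (Sum.inl g)) = φ w := by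
        simp [kmul, φ, hw]
      constructor
      · intro h
        simp only [kiteAdd, Option.some.injEq] at h
        refine ⟨Or.inl (by rw [hk, hw]; exact one_pos), ?_⟩
        rw [hk, ← Option.some.inj h]
      · rintro ⟨-, heq⟩
        rw [hk] at heq
        have hz : w = z := hinj heq
        rw [← hz]
        simp [kiteAdd, hw]
    · -- rule (III): inl f + inr b
      by_cases h : ∀ i, (f (l.symm i) : G) ≤ ((b i : G))⁻¹
      · set w : Kite G I := Sum.inr (fun i => ⟨(f (l.symm i) : G) * (b i : G), by
          have := mul_le_mul_left (h i) ((b i : G)); simpa using this⟩) with hw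
        have hk : kmul l r (φ (Sum.inl f)) (φ (Sum.inr b)) = φ w := by
          simp only [kmul, φ, hw, Prod.mk.injEq]
          refine ⟨by norm_num, funext fun i => ?_⟩
          simp [zpow_neg, zpow_one, Equiv.Perm.inv_def]
        have hle : wle (kmul l r (φ (Sum.inl f)) (φ (Sum.inr b))) u := by
          rw [hk]
          refine Or.inr ⟨rfl, fun i => ?_⟩
          have := mul_le_mul_left (h i) ((b i : G))
          simpa using this
        constructor
        · intro hz
          simp only [kiteAdd, dif_pos h, Option.some.injEq] at hz
          exact ⟨hle, by rw [hk, ← Option.some.inj hz]⟩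
        · rintro ⟨-, heq⟩
          rw [hk] at heq
          have hz : w = z := hinj heq
          rw [← hz]
          simp [kiteAdd, dif_pos h, hw]
      · constructor
        · intro hz
          simp only [kiteAdd, dif_neg h] at hz
          cases hz
        · rintro ⟨hle, -⟩
          exfalso
          apply h
          intro i
          rcases hle with hlt | ⟨-, hv⟩
          · simp [kmul, φ, u] at hlt
          · have := hv i
            simp only [kmul, φ, u, zpow_neg, zpow_one, neg_zero, zpow_zero,
              Equiv.Perm.coe_one, id_eq] at this
            have h2 := mul_le_mul_left this ((b i : G))⁻¹
            simpa [Equiv.Perm.inv_def, mul_assoc] using h2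
    · -- rule (II): inr a + inl g
      by_cases h : ∀ i, (g (r.symm i) : G) ≤ ((a i : G))⁻¹
      · set w : Kite G I := Sum.inr (fun i => ⟨(a i : G) * (g (r.symm i) : G), by
          have := mul_le_mul_right (h i) ((a i : G)); simpa using this⟩) with hw
        have hk : kmul l r (φ (Sum.inr a)) (φ (Sum.inl g)) = φ w := by
          simp only [kmul, φ, hw, Prod.mk.injEq]
          refine ⟨by norm_num, funext fun i => ?_⟩
          simp [zpow_neg, zpow_one, Equiv.Perm.inv_def]
        have hle : wle (kmul l r (φ (Sum.inr a)) (φ (Sum.inl g))) u := by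
          rw [hk]
          refine Or.inr ⟨rfl, fun i => ?_⟩
          have := mul_le_mul_right (h i) ((a i : G))
          simpa using this
        constructor
        · intro hz
          simp only [kiteAdd, dif_pos h, Option.some.injEq] at hz
          exact ⟨hle, by rw [hk, ← Option.some.inj hz]⟩
        · rintro ⟨-, heq⟩
          rw [hk] at heq
          have hz : w = z := hinj heq
          rw [← hz]
          simp [kiteAdd, dif_pos h, hw]
      · constructor
        · intro hz
          simp only [kiteAdd, dif_neg h] at hz
          cases hz
        · rintro ⟨hle, -⟩
          exfalso
          apply h
          intro i
          rcases hle with hlt | ⟨-, hv⟩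
          · simp [kmul, φ, u] at hlt
          · have := hv i
            simp only [kmul, φ, u, zpow_neg, zpow_one, neg_zero, zpow_zero,
              Equiv.Perm.coe_one, id_eq] at this
            have h2 := mul_le_mul_right this ((a i : G))⁻¹
            simpa [Equiv.Perm.inv_def, ← mul_assoc] using h2
    · -- rule (I): inr + inr
      constructor
      · intro hz
        simp only [kiteAdd] at hz
        cases hz
      · rintro ⟨hle, -⟩
        exfalso
        rcases hle with hlt | ⟨heq2, -⟩
        · simp only [kmul, φ, u] at hlt; omega
        · simp only [kmul, φ, u] at heq2; omega
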